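/- Let q > 1 be real and \(\chi', \chi \in \{\pm1\}\). Define \(\Phi'(n) = (\chi')^n q^{-2|n|}\) and \(\Phi''(n) = -(\chi')^n q^{-2|n-1|}\) (matrix coefficient values of an unramified special representation over the unramified quadratic extension, residue cardinality \(q^2\), restricted to the base field), and \(\Phi(n) = \chi^n q^{-|n|}\), \(\Phi_w(n) = -\chi^n q^{-|n-1|}\). Then \((1+q)^{-1}\left(\sum_{n\in\mathbb{Z}}\Phi'(n)\Phi(n)\,q^{|n|} + \sum_{n\in\mathbb{Z}}\Phi''(n)\Phi_w(n)\,q^{|n-1|}\right) = (1+q)^{-1}\,(1+\chi'\chi)\,\frac{1+\chi'\chi\, q^{-2}}{1-\chi'\chi\, q^{-2}}\). -/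

import Mathlib

lemma aux_geom (a : ℝ) (ha : |a| < 1) :
    HasSum (fun n : ℤ => a ^ |n|) ((1 + a) / (1 - a)) := by
  have h0 : HasSum (fun n : ℕ => a ^ n) (1 - a)⁻¹ := hasSum_geometric_of_abs_lt_one ha
  have h1 : HasSum (fun n : ℕ => a ^ (n + 1)) (a * (1 - a)⁻¹) := by
    simpa [pow_succ, mul_comm] using h0.mul_left a
  have h := h0.int_rec h1
  have hne : (1 : ℝ) - a ≠ 0 := by
    intro h'
    have : a = 1 := by linarith
    simp [this] at ha
  have hfun : (Int.rec (fun n : ℕ => a ^ n) (fun n : ℕ => a ^ (n + 1)) : ℤ → ℝ)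
      = fun n : ℤ => a ^ |n| := by
    funext n
    cases n with
    | ofNat m => simp [Int.abs_eq_natAbs, zpow_natCast]
    | negSucc m =>
        show a ^ (m + 1) = a ^ |Int.negSucc m|
        have habs : |Int.negSucc m| = ((m + 1 : ℕ) : ℤ) := by
          rw [Int.abs_eq_natAbs]
          rfl
        rw [habs, zpow_natCast]
  rw [hfun] at h
  have hval : (1 - a)⁻¹ + a * (1 - a)⁻¹ = (1 + a) / (1 - a) := by
    field_simp
  rwa [hval] at h

lemma eps_zpow (ε : ℝ) (h : ε = 1 ∨ ε = -1) (n : ℤ) : ε ^ n = ε ^ |n| := by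
  have h1 : ε ^ n * ε ^ n = 1 := by
    rw [← mul_zpow]
    rcases h with h | h <;> simp [h]
  rcases le_or_gt 0 n with hn | hn
  · rw [abs_of_nonneg hn]
  · rw [abs_of_neg hn, zpow_neg]
    exact eq_inv_of_mul_eq_one_left h1

lemma hterm' (ε q : ℝ) (hε : ε = 1 ∨ ε = -1) (n : ℤ) :
    ε ^ n * q ^ (-(2 * |n|)) = (ε * q ^ (-2 : ℤ)) ^ |n| := by
  rw [show -(2 * |n|) = (-2) * |n| from by ring, eps_zpow ε hε n, mul_zpow, ← zpow_mul]

/-- Local zeta integral for `E = K × F`, `K/F` unramified, both components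
unramified special. -/
theorem stmt16 (q χ' χ : ℝ) (hq : 1 < q)
    (hχ' : χ' = 1 ∨ χ' = -1) (hχ : χ = 1 ∨ χ = -1) :
    (1 + q)⁻¹ *
        ((∑' n : ℤ, (χ' ^ n * q ^ (-(2 * |n|))) * (χ ^ n * q ^ (-|n|)) * q ^ |n|) +
          ∑' n : ℤ,
            (-(χ' ^ n * q ^ (-(2 * |n - 1|)))) * (-(χ ^ n * q ^ (-|n - 1|))) * q ^ |n - 1|)
      = (1 + q)⁻¹ * (1 + χ' * χ) *
          ((1 + χ' * χ * q ^ (-2 : ℤ)) / (1 - χ' * χ * q ^ (-2 : ℤ))) := by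
  have hq0 : (0 : ℝ) < q := by linarith
  have hqne : q ≠ 0 := ne_of_gt hq0
  have hεcases : χ' * χ = 1 ∨ χ' * χ = -1 := by
    rcases hχ' with h1 | h1 <;> rcases hχ with h2 | h2 <;> simp [h1, h2]
  have hεne : χ' * χ ≠ 0 := by rcases hεcases with h | h <;> rw [h] <;> norm_num
  have hεabs : |χ' * χ| = 1 := by rcases hεcases with h | h <;> rw [h] <;> norm_num
  have hq2 : q ^ (-2 : ℤ) = (q ^ 2)⁻¹ := by
    rw [zpow_neg, show ((2:ℤ)) = ((2:ℕ):ℤ) from rfl, zpow_natCast]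
  have habs : |χ' * χ * q ^ (-2 : ℤ)| < 1 := by
    rw [abs_mul, hεabs, one_mul, hq2, abs_inv, abs_of_pos (by positivity : (0:ℝ) < q ^ 2)]
    exact inv_lt_one_of_one_lt₀ (by nlinarith)
  have hS : HasSum (fun n : ℤ => (χ' * χ * q ^ (-2 : ℤ)) ^ |n|)
      ((1 + χ' * χ * q ^ (-2 : ℤ)) / (1 - χ' * χ * q ^ (-2 : ℤ))) :=
    aux_geom _ habs
  have hsum1 : (∑' n : ℤ, (χ' ^ n * q ^ (-(2 * |n|))) * (χ ^ n * q ^ (-|n|)) * q ^ |n|)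
      = (1 + χ' * χ * q ^ (-2 : ℤ)) / (1 - χ' * χ * q ^ (-2 : ℤ)) := by
    have hcong : ∀ n : ℤ, (χ' ^ n * q ^ (-(2 * |n|))) * (χ ^ n * q ^ (-|n|)) * q ^ |n|
        = (χ' * χ * q ^ (-2 : ℤ)) ^ |n| := by
      intro n
      have hmul : χ' ^ n * χ ^ n = (χ' * χ) ^ n := (mul_zpow χ' χ n).symm
      have hqpow : q ^ (-|n|) * q ^ |n| = 1 := by
        rw [← zpow_add₀ hqne]; simp
      calc (χ' ^ n * q ^ (-(2 * |n|))) * (χ ^ n * q ^ (-|n|)) * q ^ |n|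
          = (χ' ^ n * χ ^ n) * q ^ (-(2 * |n|)) * (q ^ (-|n|) * q ^ |n|) := by ring
        _ = (χ' * χ) ^ n * q ^ (-(2 * |n|)) := by rw [hmul, hqpow, mul_one]
        _ = (χ' * χ * q ^ (-2 : ℤ)) ^ |n| := hterm' _ q hεcases n
    rw [tsum_congr hcong]
    exact hS.tsum_eq
  have hsum2 : (∑' n : ℤ,
      (-(χ' ^ n * q ^ (-(2 * |n - 1|)))) * (-(χ ^ n * q ^ (-|n - 1|))) * q ^ |n - 1|)
      = (χ' * χ) * ((1 + χ' * χ * q ^ (-2 : ℤ)) / (1 - χ' * χ * q ^ (-2 : ℤ))) := by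
    have hshift : HasSum (fun n : ℤ => (χ' * χ * q ^ (-2 : ℤ)) ^ |n - 1|)
        ((1 + χ' * χ * q ^ (-2 : ℤ)) / (1 - χ' * χ * q ^ (-2 : ℤ))) := by
      have := (Equiv.subRight (1 : ℤ)).hasSum_iff.mpr hS
      simpa [Function.comp, Function.comp_def, Equiv.subRight] using this
    have hcong : ∀ n : ℤ,
        (-(χ' ^ n * q ^ (-(2 * |n - 1|)))) * (-(χ ^ n * q ^ (-|n - 1|))) * q ^ |n - 1|
        = (χ' * χ) * (χ' * χ * q ^ (-2 : ℤ)) ^ |n - 1| := by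
      intro n
      have hmul : χ' ^ n * χ ^ n = (χ' * χ) ^ n := (mul_zpow χ' χ n).symm
      have hεn : (χ' * χ) ^ n = (χ' * χ) * (χ' * χ) ^ (n - 1) := by
        rw [← zpow_one_add₀ hεne]
        ring_nf
      have hqpow : q ^ (-|n - 1|) * q ^ |n - 1| = 1 := by
        rw [← zpow_add₀ hqne]; simp
      calc (-(χ' ^ n * q ^ (-(2 * |n - 1|)))) * (-(χ ^ n * q ^ (-|n - 1|))) * q ^ |n - 1|
          = (χ' ^ n * χ ^ n) * q ^ (-(2 * |n - 1|)) * (q ^ (-|n - 1|) * q ^ |n - 1|) := by ring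
        _ = (χ' * χ) * ((χ' * χ) ^ (n - 1) * q ^ (-(2 * |n - 1|))) := by
            rw [hmul, hqpow, mul_one, hεn]; ring
        _ = (χ' * χ) * (χ' * χ * q ^ (-2 : ℤ)) ^ |n - 1| := by
            rw [hterm' _ q hεcases (n - 1)]
    rw [tsum_congr hcong]
    exact ((hshift.mul_left _).tsum_eq)
  rw [hsum1, hsum2]
  ring
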